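/- Let K be a convex body in ℝⁿ with C² boundary and strictly positive curvature, containing the origin in its interior, and set P_K(x) = D²(‖x‖²_K/2) for x ∈ ℝⁿ \ {0}. Then for every x ∈ ∂K: P_K(x)(x,x) = 1, P_K(x)(x,u) = 0 for all u ∈ T_x ∂K, and P_K(x)(u,v) = II_{∂K}(u,v)/h_K(ν_K(x)) for all u, v ∈ T_x ∂K. In particular, the restriction of P_K to T∂K × T∂K is a positive-definite Riemannian metric on ∂K. -/

import Mathlib

open scoped RealInnerProductSpace ENNReal NNReal Pointwise
open MeasureTheory Metric Set

noncomputable section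

/-- `Euc n` is Euclidean space `ℝⁿ`. -/
abbrev Euc (n : ℕ) := EuclideanSpace ℝ (Fin n)

/-- A convex body in `ℝⁿ` (with the origin as an interior point). -/
def IsConvexBody (n : ℕ) (K : Set (Euc n)) : Prop :=
  IsCompact K ∧ Convex ℝ K ∧ (0 : Euc n) ∈ interior K

/-- An origin-symmetric set. -/
def IsOriginSymmetric {n : ℕ} (K : Set (Euc n)) : Prop := ∀ x ∈ K, -x ∈ K

/-- The support function `h_K (x) = max_{y ∈ K} ⟨x, y⟩`. -/
def suppFn {n : ℕ} (K : Set (Euc n)) (x : Euc n) : ℝ :=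
  sSup ((fun y => ⟪x, y⟫) '' K)

/-- Half of the squared Minkowski gauge, `‖x‖_K² / 2`. -/
def halfGaugeSq {n : ℕ} (K : Set (Euc n)) (x : Euc n) : ℝ := gauge K x ^ 2 / 2

/-- The Euclidean Hessian `D²f(x)(u,v)`. -/
def hess {n : ℕ} (f : Euc n → ℝ) (x u v : Euc n) : ℝ :=
  fderiv ℝ (fun y => fderiv ℝ f y v) x u

/-- The Gauss map (outer unit normal) of `∂K`, extended `0`-homogeneously to `ℝⁿ \ {0}`:
for a smooth convex body containing the origin in its interior, the outer unit normal at
`x ∈ ∂K` is the normalized gradient of the Minkowski gauge. -/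
def gaussMap {n : ℕ} (K : Set (Euc n)) (x : Euc n) : Euc n :=
  ‖gradient (gauge K) x‖⁻¹ • gradient (gauge K) x

/-- The second fundamental form `II_{∂K}(x)(u,v)` of `∂K` (for tangent vectors `u, v`),
via the Weingarten map, i.e. the differential of the Gauss map. -/
def secondFF {n : ℕ} (K : Set (Euc n)) (x u v : Euc n) : ℝ :=
  ⟪fderiv ℝ (gaussMap K) x u, v⟫

/-- `K ∈ 𝒦²₊`: a convex body with `C²`-smooth boundary (equivalently, `‖·‖_K²` is `C²` away
from the origin) and strictly positive curvature (positive-definite second fundamental form). -/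
def IsC2PlusBody (n : ℕ) (K : Set (Euc n)) : Prop :=
  IsConvexBody n K ∧ ContDiffOn ℝ 2 (halfGaugeSq K) {(0 : Euc n)}ᶜ ∧
  ∀ x ∈ frontier K, ∀ u : Euc n, ⟪gaussMap K x, u⟫ = 0 → u ≠ 0 → 0 < secondFF K x u u

/-- `K ∈ 𝒦^{2,r}₊`: as `IsC2PlusBody`, with second derivatives of `‖·‖_K²/2` moreover
`r`-Hölder continuous on the unit sphere. -/
def IsC2HolderBody (n : ℕ) (r : ℝ) (K : Set (Euc n)) : Prop :=
  IsC2PlusBody n K ∧ ∃ C : ℝ, ∀ x ∈ sphere (0 : Euc n) 1, ∀ y ∈ sphere (0 : Euc n) 1,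
    ‖fderiv ℝ (fun z => fderiv ℝ (halfGaugeSq K) z) x
      - fderiv ℝ (fun z => fderiv ℝ (halfGaugeSq K) z) y‖ ≤ C * ‖x - y‖ ^ r

/-- `K ∈ 𝒦^{2,α}₊` for some Hölder exponent `α ∈ (0,1]`. -/
def IsC2AlphaBody (n : ℕ) (K : Set (Euc n)) : Prop :=
  ∃ r : ℝ, 0 < r ∧ r ≤ 1 ∧ IsC2HolderBody n r K

/-- `K ∈ 𝒦^∞₊`: a `C^∞`-smooth convex body with strictly positive curvature. -/
def IsSmoothBody (n : ℕ) (K : Set (Euc n)) : Prop :=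
  IsConvexBody n K ∧ ContDiffOn ℝ (⊤ : ℕ∞) (halfGaugeSq K) {(0 : Euc n)}ᶜ ∧
  ∀ x ∈ frontier K, ∀ u : Euc n, ⟪gaussMap K x, u⟫ = 0 → u ≠ 0 → 0 < secondFF K x u u

/-- The surface-area measure `S_K` of `K`, as a measure on `ℝⁿ` concentrated on `S^{n-1}`:
the push-forward of the `(n-1)`-dimensional Hausdorff measure on `∂K` via the Gauss map. -/
def surfaceMeasure (n : ℕ) (K : Set (Euc n)) : Measure (Euc n) :=
  Measure.map (gaussMap K) ((μH[(n : ℝ) - 1] : Measure (Euc n)).restrict (frontier K))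

/-- The `L^p` surface-area measure `S_p K = h_K^{1-p} S_K`. -/
def lpSurfaceMeasure (n : ℕ) (p : ℝ) (K : Set (Euc n)) : Measure (Euc n) :=
  (surfaceMeasure n K).withDensity fun θ => ENNReal.ofReal (suppFn K θ ^ (1 - p))

/-- The cone-volume measure `V_K = (1/n) h_K S_K`. -/
def coneVolumeMeasure (n : ℕ) (K : Set (Euc n)) : Measure (Euc n) :=
  (n : ℝ≥0∞)⁻¹ • (surfaceMeasure n K).withDensity fun θ => ENNReal.ofReal (suppFn K θ)

/-- The polar body `K* = {x : ⟨x,y⟩ ≤ 1 ∀ y ∈ K}`. -/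
def polarBody {n : ℕ} (K : Set (Euc n)) : Set (Euc n) := {x | ∀ y ∈ K, ⟪x, y⟫ ≤ 1}

/-- The `0`-homogeneous extension to `ℝⁿ \ {0}` of a function on the unit sphere. -/
def zeroHomExt {n : ℕ} (f : Euc n → ℝ) (x : Euc n) : ℝ := f (‖x‖⁻¹ • x)

/-- The spherical gradient `∇̄ f` of a function on the unit sphere (the Euclidean gradient of
its `0`-homogeneous extension). -/
def sphGrad {n : ℕ} (f : Euc n → ℝ) (θ : Euc n) : Euc n := gradient (zeroHomExt f) θ

/-- Orthogonal projection onto the tangent space `θ^⊥` of the unit sphere at `θ`. -/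
def tanProj {n : ℕ} (θ : Euc n) : Euc n →L[ℝ] Euc n :=
  ContinuousLinearMap.id ℝ (Euc n) - (innerSL ℝ θ).smulRight θ

/-- For a `1`-homogeneous `g : ℝⁿ → ℝ` (e.g. `g = h_K`), the endomorphism of `ℝⁿ` acting as the
Hessian `D²g(θ)` (`= ∇̄²g + g δ̄` on `θ^⊥`) on the tangent space of the sphere at `θ`, and as the
identity in the radial direction. -/
def hessEnd {n : ℕ} (g : Euc n → ℝ) (θ : Euc n) : Module.End ℝ (Euc n) :=
  (((fderiv ℝ (gradient g) θ).comp (tanProj θ)) + (innerSL ℝ θ).smulRight θ).toLinearMap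

/-- `|grad_{g_K} f|²_{g_K}(θ) = h_K(θ) ⟨(D̄²h_K)⁻¹ ∇̄f, ∇̄f⟩`, the squared norm of the gradient
of `f` with respect to the centro-affine metric `g_K = (∇̄²h_K + h_K δ̄)/h_K`. -/
def gradNormSqGK (n : ℕ) (K : Set (Euc n)) (f : Euc n → ℝ) (θ : Euc n) : ℝ :=
  suppFn K θ * ⟪Ring.inverse (hessEnd (suppFn K) θ) (sphGrad f θ), sphGrad f θ⟫

/-- The first non-zero even eigenvalue `λ_{1,e}(-Δ_K)` of the Hilbert–Brunn–Minkowski operator: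
the infimum of the Rayleigh quotients `∫ |grad f|²_{g_K} dV_K / ∫ f² dV_K` over non-zero even
`C²` functions `f` on `S^{n-1}` with `∫ f dV_K = 0`. -/
def lambdaOneEven (n : ℕ) (K : Set (Euc n)) : ℝ :=
  sInf { r : ℝ | ∃ f : Euc n → ℝ, ContDiffOn ℝ 2 (zeroHomExt f) {(0 : Euc n)}ᶜ ∧
    (∀ x, f (-x) = f x) ∧
    (∫ θ, f θ ∂(coneVolumeMeasure n K)) = 0 ∧
    (∫ θ, (f θ) ^ 2 ∂(coneVolumeMeasure n K)) ≠ 0 ∧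
    r = (∫ θ, gradNormSqGK n K f θ ∂(coneVolumeMeasure n K)) /
        (∫ θ, (f θ) ^ 2 ∂(coneVolumeMeasure n K)) }

/-- The Hilbert–Brunn–Minkowski operator
`Δ_K f = ((D̄²h_K)⁻¹)^{ij} [∇̄²_{ij}(f h_K) + (f h_K) δ̄_{ij}] - (n-1) f`. -/
def hbmLaplacian (n : ℕ) (K : Set (Euc n)) (f : Euc n → ℝ) (θ : Euc n) : ℝ :=
  LinearMap.trace ℝ (Euc n)
    ((Ring.inverse (hessEnd (suppFn K) θ)) ∘ₗ
      ((fderiv ℝ (gradient (fun x => zeroHomExt f x * suppFn K x)) θ).comp (tanProj θ)).toLinearMap)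
    - ((n : ℝ) - 1) * f θ


/-- The curvature-pinching condition `a·δ ≤ D²(‖x‖_K²/2) ≤ b·δ` (as quadratic forms)
for all `x` in the unit sphere `S^{n-1}`. -/
def HessPinched (n : ℕ) (K : Set (Euc n)) (a b : ℝ) : Prop :=
  ∀ x ∈ sphere (0 : Euc n) 1, ∀ u : Euc n,
    a * ‖u‖ ^ 2 ≤ hess (halfGaugeSq K) x u u ∧ hess (halfGaugeSq K) x u u ≤ b * ‖u‖ ^ 2

/-- The projection `π_{∂K}(x) : T_x ℝⁿ → T_x ∂K` onto the tangent space of `∂K` at `x`,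
parallel to the radial direction `x`. -/
def radialTanProj {n : ℕ} (K : Set (Euc n)) (x u : Euc n) : Euc n :=
  u - (⟪gaussMap K x, u⟫ / ⟪gaussMap K x, x⟫) • x

open scoped Classical in
/-- The `C^{2,r}`-distance between two convex bodies: the `C²`-norm of the difference of their
support functions on the unit sphere, plus the `r`-Hölder seminorm of its second derivative. -/
def c2aDist (n : ℕ) (r : ℝ) (K L : Set (Euc n)) : ℝ :=
  (⨆ θ : sphere (0 : Euc n) 1, |suppFn K ↑θ - suppFn L ↑θ|) +
  (⨆ θ : sphere (0 : Euc n) 1, ‖fderiv ℝ (suppFn K) ↑θ - fderiv ℝ (suppFn L) ↑θ‖) +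
  (⨆ θ : sphere (0 : Euc n) 1,
    ‖fderiv ℝ (fun z => fderiv ℝ (suppFn K) z) ↑θ
      - fderiv ℝ (fun z => fderiv ℝ (suppFn L) z) ↑θ‖) +
  (⨆ q : sphere (0 : Euc n) 1 × sphere (0 : Euc n) 1,
    if (q.1 : Euc n) = q.2 then 0 else
      ‖(fderiv ℝ (fun z => fderiv ℝ (suppFn K) z) ↑q.1
          - fderiv ℝ (fun z => fderiv ℝ (suppFn L) z) ↑q.1)
        - (fderiv ℝ (fun z => fderiv ℝ (suppFn K) z) ↑q.2
          - fderiv ℝ (fun z => fderiv ℝ (suppFn L) z) ↑q.2)‖ / ‖(q.1 : Euc n) - ↑q.2‖ ^ r)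

/-- The family `F_γ` of origin-symmetric `C^{2,r}` convex bodies with strictly positive curvature
admitting, for some `ℓ ∈ GL(n,ℝ)`, a curvature-pinching `a·δ ≤ D²(‖x‖_{ℓK}²/2) ≤ b·δ` on the
unit sphere with ratio `b/a = γ`. -/
def pinchedFamily (n : ℕ) (r γ : ℝ) : Set (Set (Euc n)) :=
  {K | IsC2HolderBody n r K ∧ IsOriginSymmetric K ∧
    ∃ ℓ : Euc n ≃ₗ[ℝ] Euc n, ∃ a b : ℝ, 0 < a ∧ a ≤ b ∧ b / a = γ ∧
      HessPinched n (⇑ℓ '' K) a b}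


/-! ### Auxiliary lemmas -/

/-- Euler: if `f` is 2-homogeneous near `y` along the ray, then `Df(y)(y) = 2 f y`. -/
lemma euler_fderiv {n : ℕ} {f : Euc n → ℝ} {y : Euc n}
    (hf : DifferentiableAt ℝ f y)
    (hom : ∀ᶠ t in nhds (1:ℝ), f (t • y) = t ^ 2 * f y) :
    fderiv ℝ f y y = 2 * f y := by
  have hline : HasDerivAt (fun t : ℝ => t • y) y 1 := by
    simpa using (hasDerivAt_id (1:ℝ)).smul_const y
  have h1 : HasDerivAt (fun t : ℝ => f (t • y)) (fderiv ℝ f y y) 1 := by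
    have h' : HasFDerivAt f (fderiv ℝ f y) ((fun t : ℝ => t • y) 1) := by
      simpa using hf.hasFDerivAt
    exact h'.comp_hasDerivAt 1 hline
  have h2 : HasDerivAt (fun t : ℝ => t ^ 2 * f y) (2 * f y) 1 := by
    simpa using (hasDerivAt_pow 2 (1:ℝ)).mul_const (f y)
  exact h1.unique (h2.congr_of_eventuallyEq hom)

/-- Euler for the derivative: if `Df` is 1-homogeneous near `y` along the ray, then
`D²f(y)(y, v) = Df(y)(v)`. -/
lemma euler_fderiv2 {n : ℕ} {f : Euc n → ℝ} {y v : Euc n}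
    (hf' : DifferentiableAt ℝ (fderiv ℝ f) y)
    (hom : ∀ᶠ t in nhds (1:ℝ), fderiv ℝ f (t • y) v = t * fderiv ℝ f y v) :
    fderiv ℝ (fun z => fderiv ℝ f z v) y y = fderiv ℝ f y v := by
  have hA : HasFDerivAt (fun z => fderiv ℝ f z v)
      ((ContinuousLinearMap.apply ℝ ℝ v).comp (fderiv ℝ (fderiv ℝ f) y)) y :=
    (ContinuousLinearMap.apply ℝ ℝ v).hasFDerivAt.comp y hf'.hasFDerivAt
  have hline : HasDerivAt (fun t : ℝ => t • y) y 1 := by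
    simpa using (hasDerivAt_id (1:ℝ)).smul_const y
  have h1 : HasDerivAt (fun t : ℝ => fderiv ℝ f (t • y) v)
      (fderiv ℝ (fun z => fderiv ℝ f z v) y y) 1 := by
    rw [hA.fderiv]
    have h' : HasFDerivAt (fun z => fderiv ℝ f z v)
        ((ContinuousLinearMap.apply ℝ ℝ v).comp (fderiv ℝ (fderiv ℝ f) y))
        ((fun t : ℝ => t • y) 1) := by simpa using hA
    exact h'.comp_hasDerivAt 1 hline
  have h2 : HasDerivAt (fun t : ℝ => t * fderiv ℝ f y v) (fderiv ℝ f y v) 1 := by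
    simpa using (hasDerivAt_id (1:ℝ)).mul_const (fderiv ℝ f y v)
  exact h1.unique (h2.congr_of_eventuallyEq hom)

lemma halfGaugeSq_smul {n : ℕ} (K : Set (Euc n)) {c : ℝ} (hc : 0 ≤ c) (y : Euc n) :
    halfGaugeSq K (c • y) = c ^ 2 * halfGaugeSq K y := by
  simp only [halfGaugeSq, gauge_smul_of_nonneg hc, smul_eq_mul]
  ring

lemma fderiv_halfGaugeSq_smul {n : ℕ} {K : Set (Euc n)}
    (hdiff : ∀ y : Euc n, y ≠ 0 → DifferentiableAt ℝ (halfGaugeSq K) y)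
    {y : Euc n} (hy : y ≠ 0) {c : ℝ} (hc : 0 < c) :
    fderiv ℝ (halfGaugeSq K) (c • y) = c • fderiv ℝ (halfGaugeSq K) y := by
  have hcy : c • y ≠ 0 := smul_ne_zero hc.ne' hy
  have h1 : HasFDerivAt (fun z => halfGaugeSq K (c • z))
      ((fderiv ℝ (halfGaugeSq K) (c • y)).comp (c • ContinuousLinearMap.id ℝ (Euc n))) y := by
    have hl : HasFDerivAt (fun z : Euc n => c • z) (c • ContinuousLinearMap.id ℝ (Euc n)) y :=
      (c • ContinuousLinearMap.id ℝ (Euc n)).hasFDerivAt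
    have := (hdiff _ hcy).hasFDerivAt.comp y hl
    exact this
  have h2 : HasFDerivAt (fun z => c ^ 2 * halfGaugeSq K z)
      (c ^ 2 • fderiv ℝ (halfGaugeSq K) y) y :=
    (hdiff y hy).hasFDerivAt.const_mul (c ^ 2)
  have heq : (fun z => halfGaugeSq K (c • z)) = fun z => c ^ 2 * halfGaugeSq K z := by
    funext z; exact halfGaugeSq_smul K hc.le z
  rw [heq] at h1
  have h3 := h1.unique h2
  have h4 : c • fderiv ℝ (halfGaugeSq K) (c • y) = c • (c • fderiv ℝ (halfGaugeSq K) y) := by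
    rw [smul_smul, ← pow_two, ← h3]
    ext u
    simp [mul_comm]
  exact smul_right_injective _ hc.ne' h4

lemma inner_gradient {n : ℕ} (f : Euc n → ℝ) (y u : Euc n) :
    ⟪gradient f y, u⟫ = fderiv ℝ f y u :=
  InnerProductSpace.toDual_symm_apply

lemma hasFDerivAt_gauge {n : ℕ} {K : Set (Euc n)}
    (hdiff : ∀ y : Euc n, y ≠ 0 → DifferentiableAt ℝ (halfGaugeSq K) y)
    (hgpos : ∀ y : Euc n, y ≠ 0 → 0 < gauge K y)
    {y : Euc n} (hy : y ≠ 0) :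
    HasFDerivAt (gauge K) ((gauge K y)⁻¹ • fderiv ℝ (halfGaugeSq K) y) y := by
  have hg := hgpos y hy
  have hfy : 0 < 2 * halfGaugeSq K y := by
    have : 0 < gauge K y ^ 2 / 2 := by positivity
    simpa [halfGaugeSq] using by linarith
  have h1 : HasFDerivAt (fun z => 2 * halfGaugeSq K z)
      ((2:ℝ) • fderiv ℝ (halfGaugeSq K) y) y := (hdiff y hy).hasFDerivAt.const_mul 2
  have h2 : HasDerivAt Real.sqrt (1 / (2 * Real.sqrt (2 * halfGaugeSq K y)))
      (2 * halfGaugeSq K y) := Real.hasDerivAt_sqrt hfy.ne'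
  have h3 := h2.comp_hasFDerivAt y h1
  have hsq : Real.sqrt (2 * halfGaugeSq K y) = gauge K y := by
    rw [halfGaugeSq, show 2 * (gauge K y ^ 2 / 2) = gauge K y ^ 2 by ring,
      Real.sqrt_sq (gauge_nonneg _)]
  have hfun : (Real.sqrt ∘ fun z => 2 * halfGaugeSq K z) = gauge K := by
    funext z
    simp only [Function.comp]
    rw [halfGaugeSq, show 2 * (gauge K z ^ 2 / 2) = gauge K z ^ 2 by ring,
      Real.sqrt_sq (gauge_nonneg _)]
  rw [hfun, hsq] at h3
  have hscal : (1 / (2 * gauge K y)) • ((2:ℝ) • fderiv ℝ (halfGaugeSq K) y)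
      = (gauge K y)⁻¹ • fderiv ℝ (halfGaugeSq K) y := by
    rw [smul_smul]
    congr 1
    field_simp
  rwa [hscal] at h3

lemma gradient_gauge {n : ℕ} {K : Set (Euc n)}
    (hdiff : ∀ y : Euc n, y ≠ 0 → DifferentiableAt ℝ (halfGaugeSq K) y)
    (hgpos : ∀ y : Euc n, y ≠ 0 → 0 < gauge K y)
    {y : Euc n} (hy : y ≠ 0) :
    gradient (gauge K) y = (gauge K y)⁻¹ • gradient (halfGaugeSq K) y := by
  have h := (hasFDerivAt_gauge hdiff hgpos hy).fderiv
  simp only [gradient, h, _root_.map_smul]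

lemma gaussMap_eq {n : ℕ} {K : Set (Euc n)}
    (hdiff : ∀ y : Euc n, y ≠ 0 → DifferentiableAt ℝ (halfGaugeSq K) y)
    (hgpos : ∀ y : Euc n, y ≠ 0 → 0 < gauge K y)
    {y : Euc n} (hy : y ≠ 0) :
    gaussMap K y = ‖gradient (halfGaugeSq K) y‖⁻¹ • gradient (halfGaugeSq K) y := by
  have hg := hgpos y hy
  rw [gaussMap, gradient_gauge hdiff hgpos hy, norm_smul, Real.norm_eq_abs,
    abs_of_pos (inv_pos.2 hg), smul_smul]
  congr 1
  rw [mul_inv, inv_inv]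
  rcases eq_or_ne ‖gradient (halfGaugeSq K) y‖ 0 with h0 | h0
  · rw [h0]; simp
  · field_simp

/-- **Lemma 2.2 (the anisotropic metric `P_K` on `∂K`)**: for `K ∈ 𝒦²₊` and `x ∈ ∂K`:
`P_K(x)(x,x) = 1`; `P_K(x)(x,u) = 0` for all `u ∈ T_x ∂K`; and
`P_K(x)(u,v) = II_{∂K}(u,v) / h_K(ν_K(x))` for all `u, v ∈ T_x ∂K`.
In particular the restriction of `P_K = D²(‖·‖_K²/2)` to `T∂K × T∂K` is positive definite,
i.e. a Riemannian metric on `∂K`. -/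
theorem anisotropic_metric_on_boundary
    (n : ℕ) (K : Set (Euc n)) (hK : IsC2PlusBody n K) :
    ∀ x ∈ frontier K,
      hess (halfGaugeSq K) x x x = 1 ∧
      (∀ u : Euc n, ⟪gaussMap K x, u⟫ = 0 →
        hess (halfGaugeSq K) x x u = 0 ∧
        (∀ v : Euc n, ⟪gaussMap K x, v⟫ = 0 →
          hess (halfGaugeSq K) x u v = secondFF K x u v / suppFn K (gaussMap K x)) ∧
        (u ≠ 0 → 0 < hess (halfGaugeSq K) x u u)) := by
  obtain ⟨⟨hcomp, hconv, h0⟩, hCD, hcurv⟩ := hK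
  have hKnhds : K ∈ nhds (0 : Euc n) := mem_interior_iff_mem_nhds.1 h0
  have habs : Absorbent ℝ K := absorbent_nhds_zero hKnhds
  have hKcl : IsClosed K := hcomp.isClosed
  have hgpos : ∀ y : Euc n, y ≠ 0 → 0 < gauge K y := fun y hy =>
    (gauge_pos habs ((NormedSpace.isVonNBounded_iff ℝ).2 hcomp.isBounded)).2 hy
  have h2at : ∀ y : Euc n, y ≠ 0 → ContDiffAt ℝ 2 (halfGaugeSq K) y := fun y hy =>
    hCD.contDiffAt (isOpen_compl_singleton.mem_nhds (by simpa using hy))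
  have hdiff : ∀ y : Euc n, y ≠ 0 → DifferentiableAt ℝ (halfGaugeSq K) y := fun y hy =>
    (h2at y hy).differentiableAt (by norm_num)
  have hdiff' : ∀ y : Euc n, y ≠ 0 → DifferentiableAt ℝ (fderiv ℝ (halfGaugeSq K)) y :=
    fun y hy => ((h2at y hy).fderiv_right (m := 1) (by norm_num)).differentiableAt (by norm_num)
  intro x hx
  have hx0 : x ≠ 0 := by
    rintro rfl
    exact hx.2 (h0)
  have hg1 : gauge K x = 1 := (gauge_eq_one_iff_mem_frontier hconv hKnhds).2 hx
  have hfx : halfGaugeSq K x = 1 / 2 := by rw [halfGaugeSq, hg1]; norm_num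
  -- Euler identities at x
  have hom1 : ∀ᶠ t in nhds (1:ℝ), halfGaugeSq K (t • x) = t ^ 2 * halfGaugeSq K x := by
    filter_upwards [Ioi_mem_nhds (zero_lt_one)] with t ht
    exact halfGaugeSq_smul K (le_of_lt ht) x
  have heuler1 : fderiv ℝ (halfGaugeSq K) x x = 1 := by
    rw [euler_fderiv (hdiff x hx0) hom1, hfx]; norm_num
  have heuler2 : ∀ v : Euc n,
      fderiv ℝ (fun z => fderiv ℝ (halfGaugeSq K) z v) x x = fderiv ℝ (halfGaugeSq K) x v := by
    intro v
    refine euler_fderiv2 (hdiff' x hx0) ?_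
    filter_upwards [Ioi_mem_nhds (zero_lt_one)] with t ht
    rw [fderiv_halfGaugeSq_smul hdiff hx0 ht]
    simp
  -- gradient basics at x
  set F : Euc n → Euc n := gradient (halfGaugeSq K) with hF
  have hGin : ∀ (y u : Euc n), ⟪F y, u⟫ = fderiv ℝ (halfGaugeSq K) y u := fun y u =>
    inner_gradient _ y u
  have hGx : ⟪F x, x⟫ = 1 := by rw [hGin, heuler1]
  have hGne : F x ≠ 0 := by
    intro h
    rw [h, inner_zero_left] at hGx
    norm_num at hGx
  set N : ℝ := ‖F x‖ with hN
  have hNpos : 0 < N := norm_pos_iff.2 hGne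
  have hgauss : gaussMap K x = N⁻¹ • F x := gaussMap_eq hdiff hgpos hx0
  have hνin : ∀ u : Euc n, ⟪gaussMap K x, u⟫ = N⁻¹ * fderiv ℝ (halfGaugeSq K) x u := by
    intro u
    rw [hgauss, real_inner_smul_left, hGin]
  have htan : ∀ u : Euc n, ⟪gaussMap K x, u⟫ = 0 → fderiv ℝ (halfGaugeSq K) x u = 0 := by
    intro u hu
    rw [hνin u] at hu
    rcases mul_eq_zero.1 hu with h | h
    · exact absurd h (by positivity)
    · exact h
  -- the support function of the normal
  have hxK : x ∈ K := hKcl.frontier_subset hx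
  have hbound : ∀ y ∈ K, ⟪gaussMap K x, y⟫ ≤ ⟪gaussMap K x, x⟫ := by
    intro y hy
    have hd : fderiv ℝ (halfGaugeSq K) x (y - x) ≤ 0 := by
      set φ : ℝ → ℝ := fun t => halfGaugeSq K (x + t • (y - x)) with hφ
      have hline : HasDerivAt (fun t : ℝ => x + t • (y - x)) (y - x) 0 := by
        simpa using ((hasDerivAt_id (0:ℝ)).smul_const (y - x)).const_add x
      have hφd : HasDerivAt φ (fderiv ℝ (halfGaugeSq K) x (y - x)) 0 := by
        have h' : HasFDerivAt (halfGaugeSq K) (fderiv ℝ (halfGaugeSq K) x)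
            ((fun t : ℝ => x + t • (y - x)) 0) := by simpa using (hdiff x hx0).hasFDerivAt
        exact h'.comp_hasDerivAt 0 hline
      have hφle : ∀ t ∈ Ioc (0:ℝ) 1, φ t ≤ φ 0 := by
        intro t ht
        have hrepr : x + t • (y - x) = (1 - t) • x + t • y := by
          rw [smul_sub, sub_smul, one_smul]
          abel
        have hgy : gauge K y ≤ 1 := gauge_le_one_of_mem hy
        have hgle : gauge K (x + t • (y - x)) ≤ 1 := by
          rw [hrepr]
          calc gauge K ((1 - t) • x + t • y)
              ≤ gauge K ((1 - t) • x) + gauge K (t • y) := gauge_add_le hconv habs _ _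
            _ = (1 - t) * gauge K x + t * gauge K y := by
                rw [gauge_smul_of_nonneg (by linarith [ht.2] : (0:ℝ) ≤ 1 - t),
                  gauge_smul_of_nonneg ht.1.le, smul_eq_mul, smul_eq_mul]
            _ ≤ (1 - t) * 1 + t * 1 := by
                have h1t : (0:ℝ) ≤ 1 - t := by linarith [ht.2]
                exact add_le_add (mul_le_mul_of_nonneg_left (le_of_eq hg1) h1t)
                  (mul_le_mul_of_nonneg_left hgy ht.1.le)
            _ = 1 := by ring
        have : gauge K (x + t • (y - x)) ^ 2 ≤ 1 :=
          pow_le_one₀ (gauge_nonneg _) hgle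
        simp only [hφ, halfGaugeSq]
        rw [show x + (0:ℝ) • (y - x) = x by simp, hg1]
        nlinarith
      have hslope := hasDerivAt_iff_tendsto_slope.1 hφd
      have h2 : Filter.Tendsto (slope φ 0) (nhdsWithin (0:ℝ) (Ioi 0))
          (nhds (fderiv ℝ (halfGaugeSq K) x (y - x))) :=
        hslope.mono_left (nhdsWithin_mono _ (fun t ht => ne_of_gt ht))
      refine le_of_tendsto h2 ?_
      filter_upwards [Ioc_mem_nhdsGT_of_mem (by constructor <;> norm_num : (0:ℝ) ∈ Ico 0 1)]
        with t ht
      rw [slope_def_field]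
      have hnum : φ t - φ 0 ≤ 0 := sub_nonpos.2 (hφle t ht)
      have hden : 0 < t - 0 := by simpa using ht.1
      exact div_nonpos_of_nonpos_of_nonneg hnum hden.le
    have : ⟪gaussMap K x, y - x⟫ ≤ 0 := by
      rw [hνin]
      exact mul_nonpos_of_nonneg_of_nonpos (by positivity) hd
    rw [inner_sub_right] at this
    linarith
  have hνx : ⟪gaussMap K x, x⟫ = N⁻¹ := by rw [hνin, heuler1, mul_one]
  have hsupp : suppFn K (gaussMap K x) = N⁻¹ := by
    rw [suppFn]
    rw [show N⁻¹ = ⟪gaussMap K x, x⟫ from hνx.symm]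
    exact IsGreatest.csSup_eq ⟨⟨x, hxK, rfl⟩, by rintro r ⟨y, hy, rfl⟩; exact hbound y hy⟩
  -- part 1
  refine ⟨?_, ?_⟩
  · show fderiv ℝ (fun z => fderiv ℝ (halfGaugeSq K) z x) x x = 1
    rw [heuler2 x, heuler1]
  intro u hu
  have hu' : fderiv ℝ (halfGaugeSq K) x u = 0 := htan u hu
  -- differentiability of the gradient field
  have hFd : DifferentiableAt ℝ F x := by
    have hsymm : DifferentiableAt ℝ
        (fun z => (InnerProductSpace.toDual ℝ (Euc n)).symm (fderiv ℝ (halfGaugeSq K) z)) x :=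
      (InnerProductSpace.toDual ℝ
        (Euc n)).symm.toContinuousLinearEquiv.differentiableAt.comp x (hdiff' x hx0)
    exact hsymm
  have hhessinner : ∀ u' v : Euc n,
      ⟪fderiv ℝ F x u', v⟫ = fderiv ℝ (fun z => fderiv ℝ (halfGaugeSq K) z v) x u' := by
    intro u' v
    have hfun : (fun z => fderiv ℝ (halfGaugeSq K) z v) = fun z => ⟪F z, v⟫ := by
      funext z; rw [hGin]
    rw [hfun]
    rw [fderiv_inner_apply ℝ hFd (differentiableAt_const v) u']
    simp [real_inner_comm]
  -- second fundamental form computation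
  have hsecond : ∀ u' v : Euc n, ⟪gaussMap K x, v⟫ = 0 →
      secondFF K x u' v = N⁻¹ * fderiv ℝ (fun z => fderiv ℝ (halfGaugeSq K) z v) x u' := by
    intro u' v hv
    have hv' : ⟪F x, v⟫ = 0 := by rw [hGin]; exact htan v hv
    have hnormd : DifferentiableAt ℝ (fun y => ‖F y‖⁻¹) x :=
      (DifferentiableAt.norm ℝ hFd hGne).inv hNpos.ne'
    have hGev : gaussMap K =ᶠ[nhds x] fun y => ‖F y‖⁻¹ • F y := by
      filter_upwards [isOpen_compl_singleton.mem_nhds (by simpa using hx0)] with y hy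
      exact gaussMap_eq hdiff hgpos (by simpa using hy)
    have hfd : fderiv ℝ (gaussMap K) x = fderiv ℝ (fun y => ‖F y‖⁻¹ • F y) x :=
      hGev.fderiv_eq
    rw [secondFF, hfd, fderiv_fun_smul hnormd hFd]
    simp only [ContinuousLinearMap.add_apply, ContinuousLinearMap.smul_apply,
      ContinuousLinearMap.smulRight_apply]
    rw [inner_add_left, real_inner_smul_left, real_inner_smul_left, hv', hhessinner]
    simp [hN]
  refine ⟨?_, ?_, ?_⟩
  · show fderiv ℝ (fun z => fderiv ℝ (halfGaugeSq K) z u) x x = 0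
    rw [heuler2 u, hu']
  · intro v hv
    show fderiv ℝ (fun z => fderiv ℝ (halfGaugeSq K) z v) x u
      = secondFF K x u v / suppFn K (gaussMap K x)
    rw [hsupp, hsecond u v hv]
    field_simp
  · intro hune
    have hpos := hcurv x hx u hu hune
    rw [hsecond u u hu] at hpos
    show 0 < fderiv ℝ (fun z => fderiv ℝ (halfGaugeSq K) z u) x u
    exact (mul_pos_iff_of_pos_left (by positivity)).1 hpos


end
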